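/- arXiv:2404.19564 — 2 statements merged into one kernel-verified Lean document; each statement's English description precedes it below -/
import Mathlib

section
/- Let R ⊆ ℤ² be a finite simply connected region and let c be a corner of R. Then for any two vertices u, v ∈ R \ {c}, the graph distance between u and v in the subgraph induced on R \ {c} equals the graph distance between u and v in the subgraph induced on R. -/
/-- The grid graph on ℤ²: two vertices are adjacent iff their Manhattan distance is 1. -/
def gridGraph : SimpleGraph (ℤ × ℤ) where
  Adj a b := (a.1 - b.1).natAbs + (a.2 - b.2).natAbs = 1
  symm := ⟨by intro a b h; omega⟩
  loopless := ⟨by intro a h; omega⟩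

/-- The set of neighbors of `v` (in the grid graph) lying in `R`. -/
def nbrsIn (R : Set (ℤ × ℤ)) (v : ℤ × ℤ) : Set (ℤ × ℤ) :=
  {u | u ∈ R ∧ gridGraph.Adj v u}

/-- `R` is simply connected: both `R` and its complement induce connected subgraphs. -/
def SimplyConnected (R : Set (ℤ × ℤ)) : Prop :=
  (gridGraph.induce R).Connected ∧ (gridGraph.induce Rᶜ).Connected

/-- `v` is a corner of `R`: either it has at most one neighbor in `R`, or it has exactly
two neighbors `u, u'` in `R` and they have a common grid-neighbor `w ∈ R` distinct from `v`. -/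
def IsGridCorner (R : Set (ℤ × ℤ)) (v : ℤ × ℤ) : Prop :=
  v ∈ R ∧
    ((nbrsIn R v).ncard ≤ 1 ∨
      ∃ u u' : ℤ × ℤ, u ≠ u' ∧ nbrsIn R v = {u, u'} ∧
        ∃ w : ℤ × ℤ, w ∈ R ∧ w ≠ v ∧ gridGraph.Adj u w ∧ gridGraph.Adj u' w)


def inclHom (S : Set (ℤ × ℤ)) : gridGraph.induce S →g gridGraph :=
  ⟨Subtype.val, fun h => h⟩

lemma proj_walk (S : Set (ℤ × ℤ)) {a b : {x // x ∈ S}} (p : (gridGraph.induce S).Walk a b) :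
    ∃ q : gridGraph.Walk a.val b.val, q.length = p.length ∧ ∀ x ∈ q.support, x ∈ S := by
  refine ⟨p.map (inclHom S), p.length_map _, ?_⟩
  intro x hx
  replace hx : x ∈ p.support.map (inclHom S) :=
    Eq.subst (motive := fun l => x ∈ l) (SimpleGraph.Walk.support_map (inclHom S) p) hx
  obtain ⟨y, _, rfl⟩ := List.mem_map.mp hx
  exact y.2

lemma lift_walk (S : Set (ℤ × ℤ)) : ∀ {u v : ℤ × ℤ} (p : gridGraph.Walk u v)
    (_ : ∀ x ∈ p.support, x ∈ S) (hu : u ∈ S) (hv : v ∈ S),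
    ∃ q : (gridGraph.induce S).Walk ⟨u, hu⟩ ⟨v, hv⟩, q.length = p.length := by
  intro u v p
  induction p with
  | nil => intro _ _ _; exact ⟨.nil, rfl⟩
  | @cons u b v h p ih =>
    intro hs hu hv
    have hb : b ∈ S := hs _ (by simp)
    obtain ⟨q, hq⟩ := ih (fun x hx => hs x (by simp [hx])) hb hv
    exact ⟨.cons (by simpa using h) q, by simp [hq]⟩

lemma surgery (R : Set (ℤ × ℤ)) (hfin : R.Finite) (c : ℤ × ℤ) (hc : IsGridCorner R c) :
    ∀ n : ℕ, ∀ {u v : ℤ × ℤ} (p : gridGraph.Walk u v), p.length ≤ n →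
    (∀ x ∈ p.support, x ∈ R) → u ≠ c → v ≠ c →
    ∃ q : gridGraph.Walk u v, q.length ≤ p.length ∧ ∀ x ∈ q.support, x ∈ R \ {c} := by
  intro n
  induction n with
  | zero =>
    intro u v p hlen hsup hu hv
    refine ⟨p, le_rfl, fun x hx => ⟨hsup x hx, ?_⟩⟩
    rcases p with _ | _
    · simp at hx; subst hx; exact hu
    · simp at hlen
  | succ n ih =>
    intro u v p hlen hsup hu hv
    by_cases hcsup : c ∈ p.support
    · set d := p.takeUntil c hcsup with hd
      set e := p.dropUntil c hcsup with he
      have hspec : d.append e = p := p.take_spec hcsup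
      have hlen_split : d.length + e.length = p.length := by
        rw [← hspec, SimpleGraph.Walk.length_append]
      have hdsup : ∀ x ∈ d.support, x ∈ R := fun x hx =>
        hsup x (p.support_takeUntil_subset hcsup hx)
      have hesup : ∀ x ∈ e.support, x ∈ R := fun x hx =>
        hsup x (p.support_dropUntil_subset hcsup hx)
      -- e = cons hcb e'
      rcases he2 : e with _ | @⟨_, b, _, hcb, e'⟩
      · exact absurd rfl hv
      -- decompose d from the back: d.reverse : Walk c u
      rcases hd2 : d.reverse with _ | @⟨_, a, _, hca, t⟩
      · exact absurd rfl hu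
      have hdeq : d = (SimpleGraph.Walk.cons hca t).reverse := by
        rw [← hd2, SimpleGraph.Walk.reverse_reverse]
      have htsup : ∀ x ∈ t.support, x ∈ R := by
        intro x hx
        apply hdsup
        rw [hdeq, SimpleGraph.Walk.support_reverse, List.mem_reverse,
          SimpleGraph.Walk.support_cons]
        exact List.mem_cons_of_mem _ hx
      have hdlen : d.length = t.length + 1 := by
        rw [hdeq, SimpleGraph.Walk.length_reverse, SimpleGraph.Walk.length_cons]
      have helen : e.length = e'.length + 1 := by rw [he2, SimpleGraph.Walk.length_cons]
      have hesup' : ∀ x ∈ e'.support, x ∈ R := by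
        intro x hx
        apply hesup
        rw [he2, SimpleGraph.Walk.support_cons]
        exact List.mem_cons_of_mem _ hx
      have haR : a ∈ R := htsup a t.start_mem_support
      have hbR : b ∈ R := hesup' b e'.start_mem_support
      have hane : a ≠ c := hca.ne.symm
      have hbne : b ≠ c := hcb.ne.symm
      have amem : a ∈ nbrsIn R c := ⟨haR, hca⟩
      have bmem : b ∈ nbrsIn R c := ⟨hbR, hcb⟩
      obtain ⟨e'', hlen'', hsup''⟩ := ih e' (by omega) hesup' hbne hv
      obtain ⟨t'', hlent'', hsupt''⟩ := ih t.reverse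
        (by rw [SimpleGraph.Walk.length_reverse]; omega)
        (by intro x hx; rw [SimpleGraph.Walk.support_reverse, List.mem_reverse] at hx
            exact htsup x hx) hu hane
      by_cases hab : a = b
      · subst hab
        refine ⟨t''.append e'', ?_, ?_⟩
        · rw [SimpleGraph.Walk.length_append]
          rw [SimpleGraph.Walk.length_reverse] at hlent''
          omega
        · intro x hx
          rw [SimpleGraph.Walk.mem_support_append_iff] at hx
          rcases hx with hx | hx
          · exact hsupt'' x hx
          · exact hsup'' x hx
      · rcases hc.2 with hle | ⟨x, y, hxy, hset, w, hwR, hwc, hxw, hyw⟩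
        · have hfinN : (nbrsIn R c).Finite := hfin.subset (fun z hz => hz.1)
          exact absurd ((Set.ncard_le_one_iff hfinN).mp hle amem bmem) hab
        · have haw : gridGraph.Adj a w := by
            have : a ∈ ({x, y} : Set (ℤ × ℤ)) := hset ▸ amem
            rcases this with h | h <;> subst h <;> assumption
          have hbw : gridGraph.Adj b w := by
            have : b ∈ ({x, y} : Set (ℤ × ℤ)) := hset ▸ bmem
            rcases this with h | h <;> subst h <;> assumption
          refine ⟨t''.append (.cons haw (.cons hbw.symm e'')), ?_, ?_⟩
          · rw [SimpleGraph.Walk.length_append,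
              SimpleGraph.Walk.length_cons, SimpleGraph.Walk.length_cons]
            rw [SimpleGraph.Walk.length_reverse] at hlent''
            omega
          · intro z hz
            rw [SimpleGraph.Walk.mem_support_append_iff] at hz
            rcases hz with hz | hz
            · exact hsupt'' z hz
            · rw [SimpleGraph.Walk.support_cons, SimpleGraph.Walk.support_cons] at hz
              simp only [List.mem_cons] at hz
              rcases hz with rfl | rfl | hz
              · exact ⟨haR, hane⟩
              · exact ⟨hwR, hwc⟩
              · exact hsup'' z (by simpa using hz)
    · exact ⟨p, le_rfl, fun x hx => ⟨hsup x hx, fun h => hcsup (h ▸ hx)⟩⟩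


/-- Removing a corner from a finite simply connected region does not change graph
distances between the remaining vertices. -/
theorem remove_corner_preserves_dist (R : Set (ℤ × ℤ)) (hfin : R.Finite)
    (hsc : SimplyConnected R) (c : ℤ × ℤ) (hc : IsGridCorner R c)
    (u v : ℤ × ℤ) (hu : u ∈ R \ {c}) (hv : v ∈ R \ {c}) :
    (gridGraph.induce (R \ {c})).dist ⟨u, hu⟩ ⟨v, hv⟩ =
      (gridGraph.induce R).dist ⟨u, hu.1⟩ ⟨v, hv.1⟩ := by
  have hune : u ≠ c := hu.2
  have hvne : v ≠ c := hv.2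
  -- dist in R \ {c} ≤ dist in R
  obtain ⟨p, hp⟩ := hsc.1.exists_walk_length_eq_dist ⟨u, hu.1⟩ ⟨v, hv.1⟩
  obtain ⟨p', hp'len, hp'sup⟩ := proj_walk R p
  obtain ⟨q, hqlen, hqsup⟩ := surgery R hfin c hc p'.length p' le_rfl hp'sup hune hvne
  obtain ⟨q', hq'len⟩ := lift_walk (R \ {c}) q hqsup hu hv
  have h1 : (gridGraph.induce (R \ {c})).dist ⟨u, hu⟩ ⟨v, hv⟩ ≤
      (gridGraph.induce R).dist ⟨u, hu.1⟩ ⟨v, hv.1⟩ := by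
    calc (gridGraph.induce (R \ {c})).dist ⟨u, hu⟩ ⟨v, hv⟩ ≤ q'.length :=
          SimpleGraph.dist_le q'
      _ = q.length := hq'len
      _ ≤ p'.length := hqlen
      _ = p.length := hp'len
      _ = _ := hp
  -- dist in R ≤ dist in R \ {c}
  have hreach : (gridGraph.induce (R \ {c})).Reachable ⟨u, hu⟩ ⟨v, hv⟩ := q'.reachable
  obtain ⟨m, hm⟩ := hreach.exists_walk_length_eq_dist
  obtain ⟨m', hm'len, hm'sup⟩ := proj_walk (R \ {c}) m
  obtain ⟨m'', hm''len⟩ := lift_walk R m' (fun x hx => (hm'sup x hx).1) hu.1 hv.1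
  have h2 : (gridGraph.induce R).dist ⟨u, hu.1⟩ ⟨v, hv.1⟩ ≤
      (gridGraph.induce (R \ {c})).dist ⟨u, hu⟩ ⟨v, hv⟩ := by
    calc (gridGraph.induce R).dist ⟨u, hu.1⟩ ⟨v, hv.1⟩ ≤ m''.length :=
          SimpleGraph.dist_le m''
      _ = m'.length := hm''len
      _ = m.length := hm'len
      _ = _ := hm
  omega
end

section
/- Let R ⊆ ℤ² be a finite simply connected region and let h be a hall of R, with u and u' its two neighbors in R. Then the subgraph induced on R \ {h} has exactly two connected components, one containing u and the other containing u'; in particular, every connected component of R \ {h} contains a neighbor of h. -/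
set_option maxHeartbeats 1000000

namespace HallAux

def gc (p a b : ℤ × ℤ) : Prop :=
  a.1 = b.1 ∧ p.1 < a.1 ∧ ((a.2 = p.2 ∧ b.2 = p.2 + 1) ∨ (a.2 = p.2 + 1 ∧ b.2 = p.2))

instance instDecGc : ∀ p a b, Decidable (gc p a b) := fun p a b => by
  unfold gc; infer_instance

def cnt (p : ℤ × ℤ) : List (ℤ × ℤ) → ℕ
  | a :: b :: t => (if gc p a b then 1 else 0) + cnt p (b :: t)
  | _ => 0

def cntE (x y : ℤ × ℤ) : List (ℤ × ℤ) → ℕ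
  | a :: b :: t => (if (a = x ∧ b = y) ∨ (a = y ∧ b = x) then 1 else 0) + cntE x y (b :: t)
  | _ => 0

lemma cnt_single (p a : ℤ × ℤ) : cnt p [a] = 0 := rfl
lemma cnt_cons (p a b : ℤ × ℤ) (t : List (ℤ × ℤ)) :
    cnt p (a :: b :: t) = (if gc p a b then 1 else 0) + cnt p (b :: t) := rfl
lemma cntE_single (x y a : ℤ × ℤ) : cntE x y [a] = 0 := rfl
lemma cntE_cons (x y a b : ℤ × ℤ) (t : List (ℤ × ℤ)) :
    cntE x y (a :: b :: t) =
      (if (a = x ∧ b = y) ∨ (a = y ∧ b = x) then 1 else 0) + cntE x y (b :: t) := rfl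

lemma cntE_eq_zero_left {x : ℤ × ℤ} (y : ℤ × ℤ) : ∀ {l : List (ℤ × ℤ)}, x ∉ l → cntE x y l = 0
  | [], _ => rfl
  | [_], _ => rfl
  | a :: b :: t, hx => by
    rw [cntE_cons, cntE_eq_zero_left y (by simp at hx ⊢; tauto)]
    have ha : a ≠ x := by rintro rfl; simp at hx
    have hb : b ≠ x := by rintro rfl; simp at hx
    simp [ha, hb]

lemma cntE_eq_zero_right {y : ℤ × ℤ} (x : ℤ × ℤ) : ∀ {l : List (ℤ × ℤ)}, y ∉ l → cntE x y l = 0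
  | [], _ => rfl
  | [_], _ => rfl
  | a :: b :: t, hy => by
    rw [cntE_cons, cntE_eq_zero_right x (by simp at hy ⊢; tauto)]
    have ha : a ≠ y := by rintro rfl; simp at hy
    have hb : b ≠ y := by rintro rfl; simp at hy
    simp [ha, hb]

lemma cntE_comm (x y : ℤ × ℤ) : ∀ (l : List (ℤ × ℤ)), cntE x y l = cntE y x l
  | [] => rfl
  | [_] => rfl
  | a :: b :: t => by
    rw [cntE_cons, cntE_cons, cntE_comm x y (b :: t)]
    congr 1
    congr 1
    · exact propext (or_comm)

lemma stepLR (p a b : ℤ × ℤ) :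
    ((if gc (p.1 + 1, p.2) a b then 1 else 0) + (if gc p a b then 1 else 0)
      + (if (a = (p.1+1, p.2) ∧ b = (p.1+1, p.2+1)) ∨ (a = (p.1+1, p.2+1) ∧ b = (p.1+1, p.2)) then 1 else 0)) % 2 = 0 := by
  obtain ⟨p1, p2⟩ := p
  obtain ⟨a1, a2⟩ := a
  obtain ⟨b1, b2⟩ := b
  split_ifs <;> simp only [gc, Prod.mk.injEq] at * <;> omega

lemma LR (p : ℤ × ℤ) : ∀ (l : List (ℤ × ℤ)),
    (cnt (p.1 + 1, p.2) l + cnt p l + cntE (p.1+1, p.2) (p.1+1, p.2+1) l) % 2 = 0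
  | [] => rfl
  | [_] => rfl
  | a :: b :: t => by
    have h1 := LR p (b :: t)
    have h2 := stepLR p a b
    rw [cnt_cons, cnt_cons, cntE_cons]
    omega

def psi (p v : ℤ × ℤ) : ℕ := if v.2 = p.2 + 1 ∧ p.1 + 1 ≤ v.1 then 1 else 0

lemma stepLU (p a b : ℤ × ℤ) (hadj : gridGraph.Adj a b) :
    ((if gc (p.1, p.2 + 1) a b then 1 else 0) + (if gc p a b then 1 else 0)
      + (if (a = (p.1, p.2+1) ∧ b = (p.1+1, p.2+1)) ∨ (a = (p.1+1, p.2+1) ∧ b = (p.1, p.2+1)) then 1 else 0)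
      + psi p a + psi p b) % 2 = 0 := by
  obtain ⟨p1, p2⟩ := p
  obtain ⟨a1, a2⟩ := a
  obtain ⟨b1, b2⟩ := b
  have hd : (a1 - b1).natAbs + (a2 - b2).natAbs = 1 := hadj
  simp only [psi]
  split_ifs <;> simp only [gc, Prod.mk.injEq] at * <;> omega

lemma LUaux (p : ℤ × ℤ) : ∀ (t : List (ℤ × ℤ)) (a : ℤ × ℤ),
    List.Chain' gridGraph.Adj (a :: t) →
    (cnt (p.1, p.2 + 1) (a :: t) + cnt p (a :: t)
      + cntE (p.1, p.2+1) (p.1+1, p.2+1) (a :: t)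
      + psi p a + psi p ((a :: t).getLast (by simp))) % 2 = 0
  | [], a, _ => by
    simp only [cnt_single, cntE_single, List.getLast_singleton]
    unfold psi
    split_ifs <;> omega
  | b :: t, a, hch => by
    have hadj : gridGraph.Adj a b := (List.isChain_cons_cons.1 hch).1
    have ih := LUaux p t b (List.isChain_cons_cons.1 hch).2
    have hstep := stepLU p a b hadj
    rw [cnt_cons, cnt_cons, cntE_cons, List.getLast_cons (by simp : (b :: t) ≠ [])]
    omega

lemma LR' (p1 p2 : ℤ) (l : List (ℤ × ℤ)) :
    (cnt (p1 + 1, p2) l + cnt (p1, p2) l + cntE (p1+1, p2) (p1+1, p2+1) l) % 2 = 0 :=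
  LR (p1, p2) l

lemma LU (p : ℤ × ℤ) (l : List (ℤ × ℤ)) (hch : List.Chain' gridGraph.Adj l)
    (hcl : l.head? = l.getLast?) :
    (cnt (p.1, p.2 + 1) l + cnt p l + cntE (p.1, p.2+1) (p.1+1, p.2+1) l) % 2 = 0 := by
  match l with
  | [] => rfl
  | a :: t =>
    have haux := LUaux p t a hch
    have hl : (a :: t).getLast (by simp) = a := by
      rw [List.getLast?_eq_getLast (l := a :: t) (by simp)] at hcl
      simp only [List.head?_cons, Option.some.injEq] at hcl
      exact hcl.symm
    rw [hl] at haux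
    omega

lemma LU' (p1 p2 : ℤ) (l : List (ℤ × ℤ)) (hch : List.Chain' gridGraph.Adj l)
    (hcl : l.head? = l.getLast?) :
    (cnt (p1, p2 + 1) l + cnt (p1, p2) l + cntE (p1, p2+1) (p1+1, p2+1) l) % 2 = 0 :=
  LU (p1, p2) l hch hcl

/-- One invariance step: adjacent points both off the closed curve have the same parity. -/
lemma step_inv (Cl : List (ℤ × ℤ)) (hch : List.Chain' gridGraph.Adj Cl)
    (hcl : Cl.head? = Cl.getLast?) (a b : ℤ × ℤ) (hadj : gridGraph.Adj a b)
    (ha : a ∉ Cl) (hb : b ∉ Cl) : cnt a Cl % 2 = cnt b Cl % 2 := by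
  obtain ⟨a1, a2⟩ := a
  obtain ⟨b1, b2⟩ := b
  have hd : (a1 - b1).natAbs + (a2 - b2).natAbs = 1 := hadj
  have hcases : (b1 = a1 + 1 ∧ b2 = a2) ∨ (a1 = b1 + 1 ∧ a2 = b2)
      ∨ (b1 = a1 ∧ b2 = a2 + 1) ∨ (a1 = b1 ∧ a2 = b2 + 1) := by omega
  rcases hcases with ⟨e1, e2⟩ | ⟨e1, e2⟩ | ⟨e1, e2⟩ | ⟨e1, e2⟩
  · rw [e1, e2] at hb ⊢
    have h1 := LR' a1 a2 Cl
    have h2 : cntE (a1 + 1, a2) (a1 + 1, a2 + 1) Cl = 0 := cntE_eq_zero_left _ hb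
    omega
  · rw [e1, e2] at ha ⊢
    have h1 := LR' b1 b2 Cl
    have h2 : cntE (b1 + 1, b2) (b1 + 1, b2 + 1) Cl = 0 := cntE_eq_zero_left _ ha
    omega
  · rw [e1, e2] at hb ⊢
    have h1 := LU' a1 a2 Cl hch hcl
    have h2 : cntE (a1, a2 + 1) (a1 + 1, a2 + 1) Cl = 0 := cntE_eq_zero_left _ hb
    omega
  · rw [e1, e2] at ha ⊢
    have h1 := LU' b1 b2 Cl hch hcl
    have h2 : cntE (b1, b2 + 1) (b1 + 1, b2 + 1) Cl = 0 := cntE_eq_zero_left _ ha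
    omega

/-- Parity is constant along grid walks avoiding the closed curve. -/
lemma inv_walk (Cl : List (ℤ × ℤ)) (hch : List.Chain' gridGraph.Adj Cl)
    (hcl : Cl.head? = Cl.getLast?) :
    ∀ (m : List (ℤ × ℤ)) (a : ℤ × ℤ), List.Chain' gridGraph.Adj (a :: m) →
      (∀ v ∈ a :: m, v ∉ Cl) →
      cnt a Cl % 2 = cnt ((a :: m).getLast (by simp)) Cl % 2
  | [], a, _, _ => by simp
  | b :: m, a, hchm, hdisj => by
    have h1 : cnt a Cl % 2 = cnt b Cl % 2 :=
      step_inv Cl hch hcl a b (List.isChain_cons_cons.1 hchm).1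
        (hdisj a (by simp)) (hdisj b (by simp))
    have h2 := inv_walk Cl hch hcl m b (List.isChain_cons_cons.1 hchm).2
      (fun v hv => hdisj v (by simp at hv ⊢; tauto))
    rw [List.getLast_cons (by simp : (b :: m) ≠ [])]
    omega

lemma cntE_append_last (h x : ℤ × ℤ) (hx : x ≠ h) :
    ∀ (l : List (ℤ × ℤ)), h ∉ l →
      cntE h x (l ++ [h]) = if l.getLast? = some x then 1 else 0
  | [], _ => by simp [cntE_single]
  | [a], hh => by
    have ha : a ≠ h := fun e => (by simpa using hh : ¬ h = a) e.symm
    show (if (a = h ∧ h = x) ∨ (a = x ∧ h = h) then 1 else 0) + cntE h x [h] = _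
    rw [cntE_single]
    simp [ha, Ne.symm hx]
  | a :: b :: t, hh => by
    have ha : a ≠ h := by simp at hh; tauto
    have hb : b ≠ h := by simp at hh; tauto
    have ih := cntE_append_last h x hx (b :: t) (by simp at hh ⊢; tauto)
    show (if (a = h ∧ b = x) ∨ (a = x ∧ b = h) then 1 else 0) + cntE h x ((b :: t) ++ [h]) = _
    rw [ih]
    have : ¬ ((a = h ∧ b = x) ∨ (a = x ∧ b = h)) := by tauto
    simp only [this, if_false]
    simp [List.getLast?_cons_cons]

lemma cntE_loop (h x : ℤ × ℤ) (hx : x ≠ h) (a : ℤ × ℤ) (t : List (ℤ × ℤ))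
    (hh : h ∉ a :: t) :
    cntE h x (h :: (a :: t) ++ [h]) =
      (if a = x then 1 else 0) + (if (a :: t).getLast? = some x then 1 else 0) := by
  have ha : a ≠ h := by simp at hh; tauto
  show (if (h = h ∧ a = x) ∨ (h = x ∧ a = h) then 1 else 0) + cntE h x ((a :: t) ++ [h]) = _
  rw [cntE_append_last h x hx (a :: t) hh]
  congr 1
  simp [hx.symm, ha]



/-- extract a plain list of grid points from a walk in an induced subgraph -/
lemma walk_list {S : Set (ℤ × ℤ)} {x y : ↥S} (Wk : (gridGraph.induce S).Walk x y) :
    ∃ m : List (ℤ × ℤ), List.Chain' gridGraph.Adj m ∧ (∀ v ∈ m, v ∈ S) ∧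
      m.head? = some x.1 ∧ m.getLast? = some y.1 := by
  refine ⟨Wk.support.map Subtype.val, ?_, ?_, ?_, ?_⟩
  · refine (List.isChain_map _).2 ?_
    exact Wk.isChain_adj_support.imp (fun a b hab => hab)
  · intro v hv
    rw [List.mem_map] at hv
    obtain ⟨⟨v', hv'⟩, _, rfl⟩ := hv
    exact hv'
  · rw [List.head?_map]
    conv_lhs => rw [Wk.support_eq_cons]
    rfl
  · rw [List.getLast?_map, List.getLast?_eq_getLast Wk.support_ne_nil,
      Wk.getLast_support]
    rfl

lemma inv_list (Cl : List (ℤ × ℤ)) (hch : List.Chain' gridGraph.Adj Cl)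
    (hcl : Cl.head? = Cl.getLast?) (m : List (ℤ × ℤ))
    (hchm : List.Chain' gridGraph.Adj m) (hdisj : ∀ v ∈ m, v ∉ Cl)
    (a b : ℤ × ℤ) (hhead : m.head? = some a) (hlast : m.getLast? = some b) :
    cnt a Cl % 2 = cnt b Cl % 2 := by
  match m with
  | [] => simp at hhead
  | c :: t =>
    have hc : c = a := by simpa using hhead
    subst hc
    have hb : (c :: t).getLast (by simp) = b := by
      rw [List.getLast?_eq_getLast (l := c :: t) (by simp)] at hlast
      simpa using hlast
    have := inv_walk Cl hch hcl t c hchm hdisj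
    rw [hb] at this
    exact this

lemma fourth {R : Set (ℤ × ℤ)} {h z u u' : ℤ × ℤ} (hnbrs : nbrsIn R h = {u, u'})
    (hadj : gridGraph.Adj h z) (h1 : z ≠ u) (h2 : z ≠ u') : z ∉ R := by
  intro hz
  have : z ∈ nbrsIn R h := ⟨hz, hadj⟩
  rw [hnbrs] at this
  simp only [Set.mem_insert_iff, Set.mem_singleton_iff] at this
  rcases this with h3 | h3
  · exact h1 h3
  · exact h2 h3

lemma config {h u u' w : ℤ × ℤ} (h1 : gridGraph.Adj h u) (h2 : gridGraph.Adj h u')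
    (h3 : gridGraph.Adj u w) (h4 : gridGraph.Adj u' w) (h5 : u ≠ u') (h6 : w ≠ h) :
    (u = (h.1+1, h.2) ∧ u' = (h.1, h.2+1) ∧ w = (h.1+1, h.2+1)) ∨
    (u' = (h.1+1, h.2) ∧ u = (h.1, h.2+1) ∧ w = (h.1+1, h.2+1)) ∨
    (u = (h.1+1, h.2) ∧ u' = (h.1, h.2-1) ∧ w = (h.1+1, h.2-1)) ∨
    (u' = (h.1+1, h.2) ∧ u = (h.1, h.2-1) ∧ w = (h.1+1, h.2-1)) ∨
    (u = (h.1-1, h.2) ∧ u' = (h.1, h.2+1) ∧ w = (h.1-1, h.2+1)) ∨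
    (u' = (h.1-1, h.2) ∧ u = (h.1, h.2+1) ∧ w = (h.1-1, h.2+1)) ∨
    (u = (h.1-1, h.2) ∧ u' = (h.1, h.2-1) ∧ w = (h.1-1, h.2-1)) ∨
    (u' = (h.1-1, h.2) ∧ u = (h.1, h.2-1) ∧ w = (h.1-1, h.2-1)) := by
  obtain ⟨x, y⟩ := h
  obtain ⟨u1, u2⟩ := u
  obtain ⟨v1, v2⟩ := u'
  obtain ⟨w1, w2⟩ := w
  have e1 : (x - u1).natAbs + (y - u2).natAbs = 1 := h1
  have e2 : (x - v1).natAbs + (y - v2).natAbs = 1 := h2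
  have e3 : (u1 - w1).natAbs + (u2 - w2).natAbs = 1 := h3
  have e4 : (v1 - w1).natAbs + (v2 - w2).natAbs = 1 := h4
  clear h1 h2 h3 h4
  simp only [Prod.mk.injEq, ne_eq, not_and] at h5 h6 ⊢
  have h5' : ¬ (u1 = v1 ∧ u2 = v2) := by
    intro ⟨a, b⟩; exact h5 a b
  have h6' : ¬ (w1 = x ∧ w2 = y) := by
    intro ⟨a, b⟩; exact h6 a b
  clear h5 h6
  have c1 : (u1 = x + 1 ∧ u2 = y) ∨ (u1 = x - 1 ∧ u2 = y) ∨ (u1 = x ∧ u2 = y + 1) ∨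
      (u1 = x ∧ u2 = y - 1) := by clear e2 e3 e4 h5' h6'; omega
  have c2 : (v1 = x + 1 ∧ v2 = y) ∨ (v1 = x - 1 ∧ v2 = y) ∨ (v1 = x ∧ v2 = y + 1) ∨
      (v1 = x ∧ v2 = y - 1) := by clear e1 e3 e4 h5' h6' c1; omega
  clear e1 e2
  rcases c1 with ⟨f1, f2⟩ | ⟨f1, f2⟩ | ⟨f1, f2⟩ | ⟨f1, f2⟩ <;>
    rcases c2 with ⟨g1, g2⟩ | ⟨g1, g2⟩ | ⟨g1, g2⟩ | ⟨g1, g2⟩ <;>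
    rw [f1, f2] at e3 <;> rw [g1, g2] at e4
  -- (R,R)
  · exact absurd ⟨f1.trans g1.symm, f2.trans g2.symm⟩ h5'
  -- (R,L)
  · exfalso; omega
  -- (R,U)
  · have cw : w1 = x + 1 ∧ w2 = y + 1 := by omega
    exact Or.inl ⟨⟨f1, f2⟩, ⟨g1, g2⟩, cw.1, cw.2⟩
  -- (R,D)
  · have cw : w1 = x + 1 ∧ w2 = y - 1 := by omega
    exact Or.inr (Or.inr (Or.inl ⟨⟨f1, f2⟩, ⟨g1, g2⟩, cw.1, cw.2⟩))
  -- (L,R)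
  · exfalso; omega
  -- (L,L)
  · exact absurd ⟨f1.trans g1.symm, f2.trans g2.symm⟩ h5'
  -- (L,U)
  · have cw : w1 = x - 1 ∧ w2 = y + 1 := by omega
    exact Or.inr (Or.inr (Or.inr (Or.inr (Or.inl ⟨⟨f1, f2⟩, ⟨g1, g2⟩, cw.1, cw.2⟩))))
  -- (L,D)
  · have cw : w1 = x - 1 ∧ w2 = y - 1 := by omega
    exact Or.inr (Or.inr (Or.inr (Or.inr (Or.inr (Or.inr (Or.inl ⟨⟨f1, f2⟩, ⟨g1, g2⟩, cw.1, cw.2⟩))))))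
  -- (U,R)
  · have cw : w1 = x + 1 ∧ w2 = y + 1 := by omega
    exact Or.inr (Or.inl ⟨⟨g1, g2⟩, ⟨f1, f2⟩, cw.1, cw.2⟩)
  -- (U,L)
  · have cw : w1 = x - 1 ∧ w2 = y + 1 := by omega
    exact Or.inr (Or.inr (Or.inr (Or.inr (Or.inr (Or.inl ⟨⟨g1, g2⟩, ⟨f1, f2⟩, cw.1, cw.2⟩)))))
  -- (U,U)
  · exact absurd ⟨f1.trans g1.symm, f2.trans g2.symm⟩ h5'
  -- (U,D)
  · exfalso; omega
  -- (D,R)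
  · have cw : w1 = x + 1 ∧ w2 = y - 1 := by omega
    exact Or.inr (Or.inr (Or.inr (Or.inl ⟨⟨g1, g2⟩, ⟨f1, f2⟩, cw.1, cw.2⟩)))
  -- (D,L)
  · have cw : w1 = x - 1 ∧ w2 = y - 1 := by omega
    exact Or.inr (Or.inr (Or.inr (Or.inr (Or.inr (Or.inr (Or.inr ⟨⟨g1, g2⟩, ⟨f1, f2⟩, cw.1, cw.2⟩))))))
  -- (D,U)
  · exfalso; omega
  -- (D,D)
  · exact absurd ⟨f1.trans g1.symm, f2.trans g2.symm⟩ h5'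



lemma adj_mk {a1 a2 b1 b2 : ℤ} (h : (a1 - b1).natAbs + (a2 - b2).natAbs = 1) :
    gridGraph.Adj (a1, a2) (b1, b2) := h

lemma pair_ne {a1 a2 b1 b2 : ℤ} (h : a1 ≠ b1 ∨ a2 ≠ b2) : (a1, a2) ≠ (b1, b2) := by
  intro e
  rw [Prod.mk.injEq] at e
  tauto

lemma not_reachable (R : Set (ℤ × ℤ)) (hRc : (gridGraph.induce Rᶜ).Connected)
    {h u u' w : ℤ × ℤ} (hhR : h ∈ R) (hne : u ≠ u') (hnbrs : nbrsIn R h = {u, u'})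
    (hwR : w ∉ R) (hadjuw : gridGraph.Adj u w) (hadju'w : gridGraph.Adj u' w)
    (hu : u ∈ R \ {h}) (hu' : u' ∈ R \ {h}) :
    ¬ (gridGraph.induce (R \ {h})).Reachable ⟨u, hu⟩ ⟨u', hu'⟩ := by
  intro hreach
  have hadjhu : gridGraph.Adj h u := by
    have : u ∈ nbrsIn R h := by rw [hnbrs]; exact Set.mem_insert _ _
    exact this.2
  have hadjhu' : gridGraph.Adj h u' := by
    have : u' ∈ nbrsIn R h := by rw [hnbrs]; exact Set.mem_insert_of_mem _ rfl
    exact this.2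
  have hwh : w ≠ h := fun e => hwR (e ▸ hhR)
  obtain ⟨Wk⟩ := hreach
  obtain ⟨Wl, hWchain, hWmem, hWhead, hWlast⟩ := walk_list Wk
  obtain ⟨t, rfl⟩ : ∃ t, Wl = u :: t := by
    cases Wl with
    | nil => simp at hWhead
    | cons a t =>
      simp only [List.head?_cons, Option.some.injEq] at hWhead
      exact ⟨t, by rw [hWhead]⟩
  have hhW : h ∉ u :: t := fun hmem => by
    have := hWmem h hmem
    simp at this
  set Cl : List (ℤ × ℤ) := h :: (u :: t) ++ [h] with hCl
  have hClchain : List.Chain' gridGraph.Adj Cl := by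
    apply List.IsChain.cons
    · apply List.IsChain.append hWchain (List.isChain_singleton h)
      intro a ha b hb
      simp only [List.head?_cons, Option.mem_def, Option.some.injEq] at hb
      subst hb
      have hWlast' : (u :: t).getLast? = some u' := hWlast
      rw [hWlast'] at ha
      simp only [Option.mem_def, Option.some.injEq] at ha
      subst ha
      exact gridGraph.adj_symm hadjhu'
    · intro b hb
      have hb' : u = b := by simpa using hb
      rw [← hb']
      exact hadjhu
  have hClclosed : Cl.head? = Cl.getLast? := by
    rw [hCl]
    rw [show h :: (u :: t) ++ [h] = (h :: u :: t) ++ [h] from rfl, List.getLast?_concat]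
    rfl
  have hClmem : ∀ v ∈ Cl, v ∈ R := by
    intro v hv
    rw [hCl] at hv
    rcases List.mem_cons.1 hv with rfl | hv2
    · exact hhR
    · rcases List.mem_append.1 hv2 with hv3 | hv3
      · exact (hWmem v hv3).1
      · rw [List.mem_singleton.1 hv3]; exact hhR
  have hClnot : ∀ v : ℤ × ℤ, v ∉ R → v ∉ Cl := fun v hv hvCl => hv (hClmem v hvCl)
  have hinv : ∀ a b : ℤ × ℤ, a ∉ R → b ∉ R → cnt a Cl % 2 = cnt b Cl % 2 := by
    intro a b haR hbR
    obtain ⟨Wc⟩ := hRc.preconnected ⟨a, haR⟩ ⟨b, hbR⟩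
    obtain ⟨m, hmch, hmmem, hmh, hml⟩ := walk_list Wc
    exact inv_list Cl hClchain hClclosed m hmch (fun v hv => hClnot v (hmmem v hv)) a b hmh hml
  have hLoop : ∀ xt : ℤ × ℤ, xt ≠ h →
      cntE h xt Cl = (if u = xt then 1 else 0) + (if u' = xt then 1 else 0) := by
    intro xt hxt
    rw [hCl, cntE_loop h xt hxt u t hhW]
    congr 1
    rw [hWlast]
    simp only [Option.some.injEq]
  obtain ⟨x, y⟩ := h
  have ey : y - 1 + 1 = y := by omega
  have ex : x - 1 + 1 = x := by omega
  rcases config hadjhu hadjhu' hadjuw hadju'w hne hwh with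
    ⟨cu, cu', cw⟩ | ⟨cu', cu, cw⟩ | ⟨cu, cu', cw⟩ | ⟨cu', cu, cw⟩ |
    ⟨cu, cu', cw⟩ | ⟨cu', cu, cw⟩ | ⟨cu, cu', cw⟩ | ⟨cu', cu, cw⟩ <;>
    subst cu <;> subst cu' <;> subst cw
  -- Case A : u = (x+1,y), u' = (x,y+1), w = (x+1,y+1), z = (x,y-1)
  · have hz : ((x, y-1) : ℤ × ℤ) ∉ R :=
      fourth hnbrs (adj_mk (by omega)) (pair_ne (by left; omega)) (pair_ne (by right; omega))
    have P1 := LU' (x+1) y Cl hClchain hClclosed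
    have Z1 : cntE (x+1, y+1) (x+1+1, y+1) Cl = 0 := cntE_eq_zero_left _ (hClnot _ hwR)
    have P2 := LR' x y Cl
    have Z2 : cntE (x+1, y) (x+1, y+1) Cl = 0 := cntE_eq_zero_right _ (hClnot _ hwR)
    have P3 := LU' x (y-1) Cl hClchain hClclosed
    rw [ey] at P3
    have E1 : cntE (x, y) (x+1, y) Cl = 1 := by
      rw [hLoop (x+1, y) (pair_ne (by left; omega))]
      rw [if_pos rfl, if_neg (pair_ne (by left; omega))]
    have hwz := hinv (x+1, y+1) (x, y-1) hwR hz
    omega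
  -- Case B : u' = (x+1,y), u = (x,y+1), w = (x+1,y+1), z = (x-1,y)
  · have hz : ((x-1, y) : ℤ × ℤ) ∉ R :=
      fourth hnbrs (adj_mk (by omega)) (pair_ne (by left; omega)) (pair_ne (by left; omega))
    have P1 := LR' x (y+1) Cl
    have Z1 : cntE (x+1, y+1) (x+1, y+1+1) Cl = 0 := cntE_eq_zero_left _ (hClnot _ hwR)
    have P2 := LU' x y Cl hClchain hClclosed
    have Z2 : cntE (x, y+1) (x+1, y+1) Cl = 0 := cntE_eq_zero_right _ (hClnot _ hwR)
    have P3 := LR' (x-1) y Cl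
    rw [ex] at P3
    have E1 : cntE (x, y) (x, y+1) Cl = 1 := by
      rw [hLoop (x, y+1) (pair_ne (by right; omega))]
      rw [if_pos rfl, if_neg (pair_ne (by left; omega))]
    have hwz := hinv (x+1, y+1) (x-1, y) hwR hz
    omega
  -- Case C : u = (x+1,y), u' = (x,y-1), w = (x+1,y-1), z = (x,y+1)
  · have hz : ((x, y+1) : ℤ × ℤ) ∉ R :=
      fourth hnbrs (adj_mk (by omega)) (pair_ne (by left; omega)) (pair_ne (by right; omega))
    have P1 := LR' x (y-1) Cl
    have Z1 : cntE (x+1, y-1) (x+1, y-1+1) Cl = 0 := cntE_eq_zero_left _ (hClnot _ hwR)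
    have P2 := LU' x (y-1) Cl hClchain hClclosed
    rw [ey] at P2
    have E1 : cntE (x, y) (x+1, y) Cl = 1 := by
      rw [hLoop (x+1, y) (pair_ne (by left; omega))]
      rw [if_pos rfl, if_neg (pair_ne (by left; omega))]
    have P3 := LU' x y Cl hClchain hClclosed
    have Z3 : cntE (x, y+1) (x+1, y+1) Cl = 0 := cntE_eq_zero_left _ (hClnot _ hz)
    have hwz := hinv (x+1, y-1) (x, y+1) hwR hz
    omega
  -- Case D : u' = (x+1,y), u = (x,y-1), w = (x+1,y-1), z = (x,y+1)
  · have hz : ((x, y+1) : ℤ × ℤ) ∉ R :=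
      fourth hnbrs (adj_mk (by omega)) (pair_ne (by right; omega)) (pair_ne (by left; omega))
    have P1 := LR' x (y-1) Cl
    have Z1 : cntE (x+1, y-1) (x+1, y-1+1) Cl = 0 := cntE_eq_zero_left _ (hClnot _ hwR)
    have P2 := LU' x (y-1) Cl hClchain hClclosed
    rw [ey] at P2
    have E1 : cntE (x, y) (x+1, y) Cl = 1 := by
      rw [hLoop (x+1, y) (pair_ne (by left; omega))]
      rw [if_neg (pair_ne (by left; omega)), if_pos rfl]
    have P3 := LU' x y Cl hClchain hClclosed
    have Z3 : cntE (x, y+1) (x+1, y+1) Cl = 0 := cntE_eq_zero_left _ (hClnot _ hz)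
    have hwz := hinv (x+1, y-1) (x, y+1) hwR hz
    omega
  -- Case E : u = (x-1,y), u' = (x,y+1), w = (x-1,y+1), z = (x,y-1)
  · have hz : ((x, y-1) : ℤ × ℤ) ∉ R :=
      fourth hnbrs (adj_mk (by omega)) (pair_ne (by left; omega)) (pair_ne (by right; omega))
    have P1 := LU' (x-1) y Cl hClchain hClclosed
    have Z1 : cntE (x-1, y+1) (x-1+1, y+1) Cl = 0 := cntE_eq_zero_left _ (hClnot _ hwR)
    have P2 := LR' (x-1) y Cl
    rw [ex] at P2
    have E1 : cntE (x, y) (x, y+1) Cl = 1 := by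
      rw [hLoop (x, y+1) (pair_ne (by right; omega))]
      rw [if_neg (pair_ne (by left; omega)), if_pos rfl]
    have P3 := LU' x (y-1) Cl hClchain hClclosed
    rw [ey] at P3
    have E3 : cntE (x, y) (x+1, y) Cl = 0 := by
      rw [hLoop (x+1, y) (pair_ne (by left; omega))]
      rw [if_neg (pair_ne (by left; omega)), if_neg (pair_ne (by left; omega))]
    have hwz := hinv (x-1, y+1) (x, y-1) hwR hz
    omega
  -- Case F : u' = (x-1,y), u = (x,y+1), w = (x-1,y+1), z = (x,y-1)
  · have hz : ((x, y-1) : ℤ × ℤ) ∉ R :=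
      fourth hnbrs (adj_mk (by omega)) (pair_ne (by right; omega)) (pair_ne (by left; omega))
    have P1 := LU' (x-1) y Cl hClchain hClclosed
    have Z1 : cntE (x-1, y+1) (x-1+1, y+1) Cl = 0 := cntE_eq_zero_left _ (hClnot _ hwR)
    have P2 := LR' (x-1) y Cl
    rw [ex] at P2
    have E1 : cntE (x, y) (x, y+1) Cl = 1 := by
      rw [hLoop (x, y+1) (pair_ne (by right; omega))]
      rw [if_pos rfl, if_neg (pair_ne (by left; omega))]
    have P3 := LU' x (y-1) Cl hClchain hClclosed
    rw [ey] at P3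
    have E3 : cntE (x, y) (x+1, y) Cl = 0 := by
      rw [hLoop (x+1, y) (pair_ne (by left; omega))]
      rw [if_neg (pair_ne (by left; omega)), if_neg (pair_ne (by left; omega))]
    have hwz := hinv (x-1, y+1) (x, y-1) hwR hz
    omega
  -- Case G : u = (x-1,y), u' = (x,y-1), w = (x-1,y-1), z = (x,y+1)
  · have hz : ((x, y+1) : ℤ × ℤ) ∉ R :=
      fourth hnbrs (adj_mk (by omega)) (pair_ne (by left; omega)) (pair_ne (by right; omega))
    have P1 := LU' (x-1) (y-1) Cl hClchain hClclosed
    rw [ex, ey] at P1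
    have E1 : cntE (x-1, y) (x, y) Cl = 1 := by
      rw [cntE_comm, hLoop (x-1, y) (pair_ne (by left; omega))]
      rw [if_pos rfl, if_neg (pair_ne (by left; omega))]
    have P2 := LR' (x-1) y Cl
    rw [ex] at P2
    have E2 : cntE (x, y) (x, y+1) Cl = 0 := by
      rw [hLoop (x, y+1) (pair_ne (by right; omega))]
      rw [if_neg (pair_ne (by left; omega)), if_neg (pair_ne (by right; omega))]
    have P3 := LU' x y Cl hClchain hClclosed
    have Z3 : cntE (x, y+1) (x+1, y+1) Cl = 0 := cntE_eq_zero_left _ (hClnot _ hz)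
    have hwz := hinv (x-1, y-1) (x, y+1) hwR hz
    omega
  -- Case H : u' = (x-1,y), u = (x,y-1), w = (x-1,y-1), z = (x,y+1)
  · have hz : ((x, y+1) : ℤ × ℤ) ∉ R :=
      fourth hnbrs (adj_mk (by omega)) (pair_ne (by right; omega)) (pair_ne (by left; omega))
    have P1 := LU' (x-1) (y-1) Cl hClchain hClclosed
    rw [ex, ey] at P1
    have E1 : cntE (x-1, y) (x, y) Cl = 1 := by
      rw [cntE_comm, hLoop (x-1, y) (pair_ne (by left; omega))]
      rw [if_neg (pair_ne (by left; omega)), if_pos rfl]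
    have P2 := LR' (x-1) y Cl
    rw [ex] at P2
    have E2 : cntE (x, y) (x, y+1) Cl = 0 := by
      rw [hLoop (x, y+1) (pair_ne (by right; omega))]
      rw [if_neg (pair_ne (by right; omega)), if_neg (pair_ne (by left; omega))]
    have P3 := LU' x y Cl hClchain hClclosed
    have Z3 : cntE (x, y+1) (x+1, y+1) Cl = 0 := cntE_eq_zero_left _ (hClnot _ hz)
    have hwz := hinv (x-1, y-1) (x, y+1) hwR hz
    omega


lemma reach_nbr (R : Set (ℤ × ℤ)) {h u u' : ℤ × ℤ} (hhR : h ∈ R)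
    (hnbrs : nbrsIn R h = {u, u'}) (hu : u ∈ R \ {h}) (hu' : u' ∈ R \ {h}) :
    ∀ (a c : ↥R) (_ : (gridGraph.induce R).Walk a c), (c : ℤ × ℤ) = h →
      ∀ (ha : (a : ℤ × ℤ) ∈ R \ {h}),
        (gridGraph.induce (R \ {h})).Reachable ⟨a, ha⟩ ⟨u, hu⟩ ∨
          (gridGraph.induce (R \ {h})).Reachable ⟨a, ha⟩ ⟨u', hu'⟩ := by
  intro a c W
  induction W with
  | nil =>
    intro hc ha
    exact absurd hc (by simpa using ha.2)
  | @cons a b c hadj W ih =>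
    intro hc ha
    by_cases hb : (b : ℤ × ℤ) = h
    · have hmem : (a : ℤ × ℤ) ∈ nbrsIn R h := ⟨a.2, by rw [← hb]; exact gridGraph.adj_symm hadj⟩
      rw [hnbrs] at hmem
      rcases hmem with h1 | h1
      · left
        rw [show (⟨(a : ℤ × ℤ), ha⟩ : ↥(R \ {h})) = ⟨u, hu⟩ from Subtype.ext h1]
      · right
        rw [show (⟨(a : ℤ × ℤ), ha⟩ : ↥(R \ {h})) = ⟨u', hu'⟩ from Subtype.ext h1]
    · have hb' : (b : ℤ × ℤ) ∈ R \ {h} := ⟨b.2, hb⟩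
      have step : (gridGraph.induce (R \ {h})).Adj ⟨a, ha⟩ ⟨b, hb'⟩ := hadj
      rcases ih hc hb' with h1 | h1
      · exact Or.inl (step.reachable.trans h1)
      · exact Or.inr (step.reachable.trans h1)

end HallAux

open HallAux in
/-- Deleting a hall `h` from a finite simply connected region leaves exactly two connected
components, one containing each of the two neighbors `u`, `u'` of `h`; in particular every
connected component of `R \ {h}` contains a neighbor of `h`. -/
theorem hall_deletion_two_components (R : Set (ℤ × ℤ)) (hfin : R.Finite)
    (hsc : SimplyConnected R) (h u u' : ℤ × ℤ) (hhR : h ∈ R) (hne : u ≠ u')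
    (hnbrs : nbrsIn R h = {u, u'})
    (hdiag : ∃ w : ℤ × ℤ, w ∉ R ∧ gridGraph.Adj u w ∧ gridGraph.Adj u' w)
    (hu : u ∈ R \ {h}) (hu' : u' ∈ R \ {h}) :
    (gridGraph.induce (R \ {h})).connectedComponentMk ⟨u, hu⟩ ≠
        (gridGraph.induce (R \ {h})).connectedComponentMk ⟨u', hu'⟩ ∧
      ∀ x : ↥(R \ {h}),
        (gridGraph.induce (R \ {h})).connectedComponentMk x =
            (gridGraph.induce (R \ {h})).connectedComponentMk ⟨u, hu⟩ ∨
          (gridGraph.induce (R \ {h})).connectedComponentMk x =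
            (gridGraph.induce (R \ {h})).connectedComponentMk ⟨u', hu'⟩ := by
  obtain ⟨w, hwR, hadjuw, hadju'w⟩ := hdiag
  have hkey := not_reachable R hsc.2 hhR hne hnbrs hwR hadjuw hadju'w hu hu'
  constructor
  · intro heq
    exact hkey (SimpleGraph.ConnectedComponent.exact heq)
  · intro x
    have hx : (x : ℤ × ℤ) ∈ R := x.2.1
    obtain ⟨Wk⟩ := hsc.1.preconnected ⟨(x : ℤ × ℤ), hx⟩ ⟨h, hhR⟩
    rcases reach_nbr R hhR hnbrs hu hu' ⟨(x : ℤ × ℤ), hx⟩ ⟨h, hhR⟩ Wk rfl x.2 with h1 | h1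
    · exact Or.inl (SimpleGraph.ConnectedComponent.sound h1)
    · exact Or.inr (SimpleGraph.ConnectedComponent.sound h1)
end
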